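/- Let D be a convex subset of a normed space X, Y a metric space, f : D → Y, and γ ≥ 0. Then f is γ-Lipschitz on D if and only if lip f(x) ≤ γ for every x ∈ D. -/

import Mathlib

open Metric Filter ENNReal Topology

/-- Auxiliary: a local "lip"-type bound at every point of a convex set implies the global
Lipschitz bound. -/
theorem lip_aux {X Y : Type*} [NormedAddCommGroup X] [NormedSpace ℝ X]
    [MetricSpace Y] (D : Set X) (hD : Convex ℝ D) (f : X → Y) (γ : ℝ) (hγ : 0 ≤ γ)
    (H : ∀ x ∈ D, ∀ B, γ < B → ∀ ρ > (0:ℝ), ∃ r, 0 < r ∧ r < ρ ∧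
      ∀ w ∈ D, dist w x < r → dist (f w) (f x) ≤ B * r) :
    ∀ u ∈ D, ∀ v ∈ D, dist (f u) (f v) ≤ γ * dist u v := by
  intro u hu v hv
  rcases eq_or_ne u v with rfl | huv
  · simp
  set L : ℝ := ‖v - u‖ with hL
  have hL0 : 0 < L := by
    simpa [hL] using sub_ne_zero_of_ne (Ne.symm huv)
  set g : ℝ → X := fun t => (1 - t) • u + t • v with hg
  have hgD : ∀ t ∈ Set.Icc (0:ℝ) 1, g t ∈ D := fun t ht =>
    hD hu hv (by linarith [ht.2]) ht.1 (by ring)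
  have hgsub : ∀ t s : ℝ, g t - g s = (t - s) • (v - u) := by
    intro t s
    simp only [hg]
    module
  have hgdist : ∀ t s : ℝ, dist (g t) (g s) = |t - s| * L := by
    intro t s
    rw [dist_eq_norm, hgsub, norm_smul, Real.norm_eq_abs, hL]
  have hg0 : g 0 = u := by simp [hg]
  have hg1 : g 1 = v := by simp [hg]
  -- main claim: for every C > γ, dist (f v) (f u) ≤ C * L
  have main : ∀ C, γ < C → dist (f v) (f u) ≤ C * L := by
    intro C hC
    have hC0 : 0 < C := lt_of_le_of_lt hγ hC
    set B : ℝ := (γ + C) / 2 with hB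
    have hγB : γ < B := by simp only [hB]; linarith
    have hBC : B < C := by simp only [hB]; linarith
    have hB0 : 0 < B := lt_of_le_of_lt hγ hγB
    set S : Set ℝ := {t | t ∈ Set.Icc (0:ℝ) 1 ∧ dist (f (g t)) (f u) ≤ C * (t * L)} with hS
    have h0S : (0:ℝ) ∈ S := by
      constructor
      · exact ⟨le_rfl, zero_le_one⟩
      · simp [hg0]
    have hSne : S.Nonempty := ⟨0, h0S⟩
    have hSbdd : BddAbove S := ⟨1, fun t ht => ht.1.2⟩
    set T : ℝ := sSup S with hT
    have hT0 : 0 ≤ T := le_csSup hSbdd h0S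
    have hT1 : T ≤ 1 := csSup_le hSne fun t ht => ht.1.2
    have hgTD : g T ∈ D := hgD T ⟨hT0, hT1⟩
    -- T satisfies the distance bound
    have hTS : dist (f (g T)) (f u) ≤ C * (T * L) := by
      apply _root_.le_of_forall_pos_le_add
      intro η hη
      obtain ⟨r, hr0, hrρ, hr⟩ := H (g T) hgTD C hC (η / C) (by positivity)
      obtain ⟨t, htS, htT⟩ : ∃ t ∈ S, T - r / L < t := by
        rcases exists_lt_of_lt_csSup hSne (by have : 0 < r / L := div_pos hr0 hL0; linarith : T - r / L < T) with ⟨t, htS, ht⟩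
        exact ⟨t, htS, ht⟩
      have htle : t ≤ T := le_csSup hSbdd htS
      have hdist : dist (g t) (g T) < r := by
        rw [hgdist]
        rw [abs_of_nonpos (by linarith)]
        have : T - t < r / L := by linarith
        calc -(t - T) * L = (T - t) * L := by ring
          _ < (r / L) * L := by
              exact mul_lt_mul_of_pos_right this hL0
          _ = r := by field_simp
      have hgtD : g t ∈ D := hgD t htS.1
      have h1' : dist (f (g t)) (f (g T)) ≤ η := by
        have := hr (g t) hgtD hdist
        calc dist (f (g t)) (f (g T)) ≤ C * r := this
          _ ≤ C * (η / C) := by nlinarith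
          _ = η := by field_simp
      calc dist (f (g T)) (f u) ≤ dist (f (g T)) (f (g t)) + dist (f (g t)) (f u) :=
            dist_triangle _ _ _
        _ ≤ η + C * (t * L) := by
            rw [dist_comm]
            exact add_le_add h1' htS.2
        _ ≤ C * (T * L) + η := by
            have h2 : t * L ≤ T * L := mul_le_mul_of_nonneg_right htle hL0.le
            have h3 : C * (t * L) ≤ C * (T * L) := mul_le_mul_of_nonneg_left h2 hC0.le
            linarith
    -- T = 1
    have hTeq : T = 1 := by
      by_contra hne
      have hTlt : T < 1 := lt_of_le_of_ne hT1 hne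
      obtain ⟨r, hr0, hrρ, hr⟩ := H (g T) hgTD B hγB ((1 - T) * L) (mul_pos (by linarith) hL0)
      set s : ℝ := T + (B / C) * (r / L) with hs
      have hsT : T < s := by
        have : 0 < (B / C) * (r / L) := by positivity
        simp only [hs]; linarith
      have hstep : (s - T) * L = (B / C) * r := by
        simp only [hs]; field_simp; ring
      have hsL : (s - T) * L < r := by
        rw [hstep]
        have : B / C < 1 := (div_lt_one hC0).mpr hBC
        nlinarith
      have hs1 : s ≤ 1 := by
        have : (s - T) * L < (1 - T) * L := lt_trans hsL hrρ
        have hst : s - T < 1 - T := lt_of_mul_lt_mul_right this hL0.le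
        linarith
      have hgsD : g s ∈ D := hgD s ⟨by linarith, hs1⟩
      have hdist : dist (g s) (g T) < r := by
        rw [hgdist, abs_of_nonneg (by linarith)]
        exact hsL
      have hsS : s ∈ S := by
        refine ⟨⟨by linarith, hs1⟩, ?_⟩
        calc dist (f (g s)) (f u) ≤ dist (f (g s)) (f (g T)) + dist (f (g T)) (f u) :=
              dist_triangle _ _ _
          _ ≤ B * r + C * (T * L) := add_le_add (hr (g s) hgsD hdist) hTS
          _ = C * ((s - T) * L) + C * (T * L) := by rw [hstep]; field_simp
          _ = C * (s * L) := by ring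
      have : s ≤ T := le_csSup hSbdd hsS
      linarith
    rw [hTeq] at hTS
    rw [hg1] at hTS
    calc dist (f v) (f u) ≤ C * (1 * L) := hTS
      _ = C * L := by ring
  -- conclude
  have hdL : dist u v = L := by rw [dist_eq_norm, ← norm_neg]; congr 1; abel
  rw [dist_comm (f u) (f v), hdL]
  apply _root_.le_of_forall_pos_le_add
  intro ε hε
  have hεL : γ < γ + ε / L := by have : 0 < ε / L := div_pos hε hL0; linarith
  have := main (γ + ε / L) hεL
  calc dist (f v) (f u) ≤ (γ + ε / L) * L := this
    _ = γ * L + ε := by field_simp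
    _ ≤ γ * L + ε := le_rfl

/-- On a convex subset of a normed space, f is γ-Lipschitz iff lip f ≤ γ everywhere. -/
theorem lipschitz_iff_lip_le {X Y : Type*} [NormedAddCommGroup X] [NormedSpace ℝ X]
    [MetricSpace Y] (D : Set X) (hD : Convex ℝ D) (f : X → Y) (γ : ℝ) (hγ : 0 ≤ γ) :
    (∀ u ∈ D, ∀ v ∈ D, dist (f u) (f v) ≤ γ * dist u v) ↔
    (∀ x ∈ D, liminf (fun r : ℝ => ⨆ u ∈ D ∩ ball x r,
      edist (f u) (f x) / ENNReal.ofReal r) (𝓝[>] (0:ℝ)) ≤ ENNReal.ofReal γ) := by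
  constructor
  · intro hf x hx
    have hev : ∀ᶠ r in 𝓝[>] (0:ℝ), (⨆ u ∈ D ∩ ball x r,
        edist (f u) (f x) / ENNReal.ofReal r) ≤ ENNReal.ofReal γ := by
      filter_upwards [self_mem_nhdsWithin] with r hr
      have hr0 : (0:ℝ) < r := hr
      refine iSup₂_le fun w hw => ?_
      apply ENNReal.div_le_of_le_mul
      rw [edist_dist, ← ENNReal.ofReal_mul hγ]
      apply ENNReal.ofReal_le_ofReal
      calc dist (f w) (f x) ≤ γ * dist w x := hf w hw.1 x hx
        _ ≤ γ * r := by
            have := (mem_ball.mp hw.2)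
            nlinarith [dist_nonneg (x := w) (y := x)]
    calc liminf _ (𝓝[>] (0:ℝ)) ≤ liminf (fun _ => ENNReal.ofReal γ) (𝓝[>] (0:ℝ)) :=
          liminf_le_liminf hev
      _ = ENNReal.ofReal γ := liminf_const _
  · intro h
    apply lip_aux D hD f γ hγ
    intro x hx B hB ρ hρ
    have hB0 : 0 < B := lt_of_le_of_lt hγ hB
    have hlt : liminf (fun r : ℝ => ⨆ u ∈ D ∩ ball x r,
        edist (f u) (f x) / ENNReal.ofReal r) (𝓝[>] (0:ℝ)) < ENNReal.ofReal B :=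
      lt_of_le_of_lt (h x hx) ((ENNReal.ofReal_lt_ofReal_iff hB0).mpr hB)
    have hfreq := frequently_lt_of_liminf_lt (h := hlt)
    obtain ⟨r, hr, hrIoo⟩ := (hfreq.and_eventually
      (eventually_of_mem (Ioo_mem_nhdsGT hρ) fun y hy => hy)).exists
    refine ⟨r, hrIoo.1, hrIoo.2, fun w hw hwr => ?_⟩
    have hle : edist (f w) (f x) / ENNReal.ofReal r ≤ ⨆ u ∈ D ∩ ball x r,
        edist (f u) (f x) / ENNReal.ofReal r :=
      le_biSup (fun u => edist (f u) (f x) / ENNReal.ofReal r) ⟨hw, mem_ball.mpr hwr⟩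
    have hlt2 : edist (f w) (f x) / ENNReal.ofReal r < ENNReal.ofReal B :=
      lt_of_le_of_lt hle hr
    have hr0 : (0:ℝ) < r := hrIoo.1
    rw [ENNReal.div_lt_iff (Or.inl (ENNReal.ofReal_pos.mpr hr0).ne') (Or.inl ENNReal.ofReal_ne_top)]
      at hlt2
    rw [edist_dist, ← ENNReal.ofReal_mul hB0.le] at hlt2
    exact (ENNReal.ofReal_lt_ofReal_iff_of_nonneg dist_nonneg).mp hlt2 |>.le
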